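/- Let h > 2 be an integer and let α, β ∈ ℂ with |α| ≤ 1, |β| ≤ 1, and α ≠ 1. Then Σ_{b=2}^{∞} (β^b / b^{h+1}) Σ_{a=1}^{b−1} a α^a = (1/(α−1)²) ( α Li_h(αβ) − α Li_{h+1}(αβ) − Li_h(αβ) + α Li_{h+1}(β) ), where Li_k(z) = Σ_{n=1}^{∞} z^n/n^k denotes the k-th polylogarithm. -/

import Mathlib

/-- The `k`-th polylogarithm `Li_k(z) = Σ_{n≥1} z^n/n^k`. -/
noncomputable def polyLog (k : ℕ) (z : ℂ) : ℂ := ∑' n : ℕ, z ^ (n + 1) / ((n : ℂ) + 1) ^ k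

lemma summable_polyLog {k : ℕ} (hk : 2 ≤ k) {z : ℂ} (hz : ‖z‖ ≤ 1) :
    Summable (fun n : ℕ => z ^ (n + 1) / ((n : ℂ) + 1) ^ k) := by
  have h1 : Summable (fun n : ℕ => 1 / ((n : ℝ) + 1) ^ k) := by
    have h0 : Summable (fun n : ℕ => 1 / ((n : ℝ)) ^ k) :=
      (Real.summable_one_div_nat_pow).2 hk
    have := (summable_nat_add_iff (f := fun n : ℕ => 1 / ((n : ℝ)) ^ k) 1).2 h0
    simpa [Nat.cast_add] using this
  apply Summable.of_norm_bounded h1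
  intro n
  have hn : (0:ℝ) < (n:ℝ) + 1 := by positivity
  have hcast : ((n : ℂ) + 1) = ((n + 1 : ℕ) : ℂ) := by push_cast; ring
  rw [norm_div, norm_pow, norm_pow, hcast, Complex.norm_natCast]
  push_cast
  rw [div_le_div_iff₀ (by positivity) (by positivity)]
  have hz1 : ‖z‖ ^ (n+1) ≤ 1 := by
    apply pow_le_one₀ (norm_nonneg z)
    simpa using hz
  nlinarith [pow_pos hn k]

lemma tsum_shift {k : ℕ} (hk : 2 ≤ k) {z : ℂ} (hz : ‖z‖ ≤ 1) :
    ∑' b : ℕ, z ^ (b + 2) / ((b : ℂ) + 2) ^ k = polyLog k z - z := by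
  have hs := summable_polyLog hk hz
  have h0 := Summable.tsum_eq_zero_add hs
  have h1 : (∑' b : ℕ, z ^ (b + 1 + 1) / (((b + 1 : ℕ) : ℂ) + 1) ^ k)
      = ∑' b : ℕ, z ^ (b + 2) / ((b : ℂ) + 2) ^ k := by
    apply tsum_congr; intro b; push_cast; ring_nf
  rw [h1] at h0
  have : polyLog k z = z ^ 1 / ((0:ℂ) + 1) ^ k + ∑' b : ℕ, z ^ (b + 2) / ((b : ℂ) + 2) ^ k := by
    simpa [polyLog] using h0
  simp at this
  rw [this]; ring

/-- For `h > 2`, `|α|, |β| ≤ 1`, `α ≠ 1`: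
`Σ_{b≥2} (β^b/b^{h+1}) Σ_{a=1}^{b−1} a α^a
  = (1/(α−1)²)(α Li_h(αβ) − α Li_{h+1}(αβ) − Li_h(αβ) + α Li_{h+1}(β))`. -/
theorem polylog_double_sum (h : ℕ) (hh : 2 < h) (α β : ℂ)
    (hα : ‖α‖ ≤ 1) (hβ : ‖β‖ ≤ 1) (hα1 : α ≠ 1) :
    (∑' b : ℕ,
        (β ^ (b + 2) / ((b : ℂ) + 2) ^ (h + 1)) *
          ∑ a ∈ Finset.Icc 1 (b + 1), (a : ℂ) * α ^ a) =
    (1 / (α - 1) ^ 2) *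
      (α * polyLog h (α * β) - α * polyLog (h + 1) (α * β) - polyLog h (α * β)
        + α * polyLog (h + 1) β) := by
  have hne : (α - 1) ≠ 0 := sub_ne_zero.2 hα1
  have hne2 : ((α - 1) ^ 2) ≠ 0 := pow_ne_zero _ hne
  have hαβ : ‖α * β‖ ≤ 1 := by
    rw [norm_mul]
    exact mul_le_one₀ hα (norm_nonneg β) hβ
  have hk1 : 2 ≤ h := le_of_lt hh
  have hk2 : 2 ≤ h + 1 := by omega
  -- closed form for the inner geometric-type sum
  have geom : ∀ n : ℕ, (∑ a ∈ Finset.Icc 1 n, (a : ℂ) * α ^ a) * (α - 1) ^ 2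
      = α - ((n : ℂ) + 1) * α ^ (n + 1) + (n : ℂ) * α ^ (n + 2) := by
    intro n
    induction n with
    | zero => simp
    | succ m ih =>
      rw [Finset.sum_Icc_succ_top (by omega)]
      push_cast
      push_cast at ih
      ring_nf
      ring_nf at ih
      linear_combination ih
  set c : ℂ := 1 / (α - 1) ^ 2 with hc
  have key : ∀ b : ℕ,
      (β ^ (b + 2) / ((b : ℂ) + 2) ^ (h + 1)) *
          ∑ a ∈ Finset.Icc 1 (b + 1), (a : ℂ) * α ^ a
      = (c * α) * (β ^ (b + 2) / ((b : ℂ) + 2) ^ (h + 1))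
        + (c * (α - 1)) * ((α * β) ^ (b + 2) / ((b : ℂ) + 2) ^ h)
        + (-(c * α)) * ((α * β) ^ (b + 2) / ((b : ℂ) + 2) ^ (h + 1)) := by
    intro b
    have hd : ((b : ℂ) + 2) ≠ 0 := by
      have : (((b + 2 : ℕ)) : ℂ) ≠ 0 := Nat.cast_ne_zero.2 (by omega)
      push_cast at this; exact this
    have hsum : (∑ a ∈ Finset.Icc 1 (b + 1), (a : ℂ) * α ^ a)
        = (α - ((b : ℂ) + 2) * α ^ (b + 2) + (((b : ℂ) + 2) - 1) * α ^ (b + 3)) / (α - 1) ^ 2 := by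
      rw [eq_div_iff hne2, geom (b + 1)]
      push_cast; ring_nf
    have hE : ((b : ℂ) + 2) ^ h ≠ 0 := pow_ne_zero _ hd
    rw [hsum, hc, show (α * β) ^ (b + 2) = α ^ (b + 2) * β ^ (b + 2) from mul_pow .. ,
      show α ^ (b + 3) = α ^ (b + 2) * α by rw [pow_succ],
      show ((b : ℂ) + 2) ^ (h + 1) = ((b : ℂ) + 2) ^ h * ((b : ℂ) + 2) from pow_succ .. ]
    generalize β ^ (b + 2) = P
    generalize α ^ (b + 2) = A
    generalize hE2 : ((b : ℂ) + 2) ^ h = E at hE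
    generalize ((b : ℂ) + 2) = D at hd hE2 ⊢
    obtain ⟨G, hGne, rfl⟩ : ∃ G : ℂ, G ≠ 0 ∧ α = G + 1 :=
      ⟨α - 1, hne, by ring⟩
    have hG2 : (G + 1 - 1 : ℂ) = G := by ring
    rw [hG2]
    have hfac : (G ^ 2 * E * D : ℂ) ≠ 0 :=
      mul_ne_zero (mul_ne_zero (pow_ne_zero _ hGne) hE) hd
    apply mul_left_cancel₀ hfac
    field_simp
    ring
  rw [tsum_congr key]
  have S1 : Summable (fun b : ℕ => β ^ (b + 2) / ((b : ℂ) + 2) ^ (h + 1)) := by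
    have := (summable_nat_add_iff (f := fun n : ℕ => β ^ (n + 1) / ((n : ℂ) + 1) ^ (h + 1)) 1).2
      (summable_polyLog hk2 hβ)
    apply this.congr; intro b; push_cast; ring_nf
  have S2 : Summable (fun b : ℕ => (α * β) ^ (b + 2) / ((b : ℂ) + 2) ^ h) := by
    have := (summable_nat_add_iff (f := fun n : ℕ => (α * β) ^ (n + 1) / ((n : ℂ) + 1) ^ h) 1).2
      (summable_polyLog hk1 hαβ)
    apply this.congr; intro b; push_cast; ring_nf
  have S3 : Summable (fun b : ℕ => (α * β) ^ (b + 2) / ((b : ℂ) + 2) ^ (h + 1)) := by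
    have := (summable_nat_add_iff
        (f := fun n : ℕ => (α * β) ^ (n + 1) / ((n : ℂ) + 1) ^ (h + 1)) 1).2
      (summable_polyLog hk2 hαβ)
    apply this.congr; intro b; push_cast; ring_nf
  rw [Summable.tsum_add (Summable.add (S1.mul_left _) (S2.mul_left _)) (S3.mul_left _),
    Summable.tsum_add (S1.mul_left _) (S2.mul_left _), tsum_mul_left, tsum_mul_left, tsum_mul_left,
    tsum_shift hk2 hβ, tsum_shift hk1 hαβ, tsum_shift hk2 hαβ, hc]
  field_simp
  ring
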